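/- The explicit matrix ψ(t,k) of the single-exponential background satisfies the background ODE ψ_t + 2ik²σ₃ψ = V^b ψ with ψ(0,k) = I, where V^b(t,k) has entries V₁₁ = -iλα², V₁₂ = (2kα + ic)e^{iωt}, V₂₁ = (2λkα - iλ·conj(c))e^{-iωt}, V₂₂ = iλα². -/

import Mathlib

open Complex Matrix

set_option maxHeartbeats 1600000

/-- The explicit single-exponential background eigenfunction
`ψ(t,k) = e^{(iω/2)tσ₃} M(t,k)` satisfies `ψ_t + 2ik²σ₃ψ = V^b ψ` with `ψ(0,k) = I`. -/
theorem background_eigenfunction_solves_ODE (α ω lam : ℝ) (hα : 0 < α)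
    (hlam : lam = 1 ∨ lam = -1) (c : ℂ) (k Ω : ℂ) (hΩne : Ω ≠ 0)
    (hΩ : Ω ^ 2 = 4 * k ^ 4 + 2 * (ω : ℂ) * k ^ 2
        + 4 * (lam : ℂ) * (α : ℂ) * (c.im : ℂ) * k
        + ((ω / 2 + lam * α ^ 2 : ℝ) : ℂ) ^ 2 - (lam : ℂ) * (‖c‖ : ℂ) ^ 2)
    (ψ Vb : ℝ → Matrix (Fin 2) (Fin 2) ℂ)
    (hψ : ψ = fun (t : ℝ) =>
      !![Complex.exp (Complex.I * ω * (t : ℂ) / 2) *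
            (Complex.cos ((t : ℂ) * Ω) + (4 * k ^ 2 + 2 * (lam : ℂ) * (α : ℂ) ^ 2 + (ω : ℂ))
              / (2 * Complex.I * Ω) * Complex.sin ((t : ℂ) * Ω)),
          Complex.exp (Complex.I * ω * (t : ℂ) / 2) *
            ((2 * (α : ℂ) * k + Complex.I * c) * Complex.sin ((t : ℂ) * Ω) / Ω);
          Complex.exp (-(Complex.I * ω * (t : ℂ) / 2)) *
            ((lam : ℂ) * (2 * (α : ℂ) * k - Complex.I * starRingEnd ℂ c)
              * Complex.sin ((t : ℂ) * Ω) / Ω),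
          Complex.exp (-(Complex.I * ω * (t : ℂ) / 2)) *
            (Complex.cos ((t : ℂ) * Ω) - (4 * k ^ 2 + 2 * (lam : ℂ) * (α : ℂ) ^ 2 + (ω : ℂ))
              / (2 * Complex.I * Ω) * Complex.sin ((t : ℂ) * Ω))])
    (hVb : Vb = fun (t : ℝ) =>
      !![-Complex.I * (lam : ℂ) * (α : ℂ) ^ 2,
          (2 * k * (α : ℂ) + Complex.I * c) * Complex.exp (Complex.I * ω * t);
          (2 * (lam : ℂ) * k * (α : ℂ) - Complex.I * (lam : ℂ) * starRingEnd ℂ c)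
            * Complex.exp (-(Complex.I * ω * t)),
          Complex.I * (lam : ℂ) * (α : ℂ) ^ 2]) :
    ψ 0 = 1 ∧
    ∀ t : ℝ, ∀ i j : Fin 2,
      deriv (fun s => ψ s i j) t
        + 2 * Complex.I * k ^ 2 * ((!![(1 : ℂ), 0; 0, -1] * ψ t) i j)
      = (Vb t * ψ t) i j := by
  subst hψ hVb
  have hlam2 : (lam : ℂ) ^ 2 = 1 := by
    rcases hlam with h | h <;> subst h <;> norm_num
  have hkey : (4*k^2+2*(lam:ℂ)*(α:ℂ)^2+(ω:ℂ))^2 - 4*Ω^2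
      = 4*(lam:ℂ)*(2*(α:ℂ)*k+Complex.I*c)*(2*(α:ℂ)*k - Complex.I * (starRingEnd ℂ c)) := by
    have hc : ((‖c‖ : ℝ):ℂ)^2 = c * (starRingEnd ℂ c) := by
      rw [← Complex.ofReal_pow, Complex.sq_norm, Complex.mul_conj]
    have hsub : c - (starRingEnd ℂ c) = 2 * (c.im:ℂ) * Complex.I := by
      simpa using Complex.sub_conj c
    push_cast at hΩ
    linear_combination (-4:ℂ)*hΩ + 4*(lam:ℂ)*hc - 8*Complex.I*(lam:ℂ)*(α:ℂ)*k*hsub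
      + (-16*k*(lam:ℂ)*(α:ℂ)*(c.im:ℂ) + 4*(lam:ℂ)*c*(starRingEnd ℂ c)) * Complex.I_sq
  refine ⟨by ext i j; fin_cases i <;> fin_cases j <;> simp [Matrix.one_fin_two], ?_⟩
  intro t i j
  -- basic derivative facts
  have hre : HasDerivAt (fun s : ℝ => (s : ℂ)) 1 t := by
    simpa using (hasDerivAt_id t).ofReal_comp
  have hlin : HasDerivAt (fun s : ℝ => (s : ℂ) * Ω) Ω t := by
    simpa using hre.mul_const Ω
  have hcos : HasDerivAt (fun s : ℝ => Complex.cos ((s : ℂ) * Ω))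
      (Ω * -(Complex.sin ((t:ℂ)*Ω))) t := by
    simpa [smul_eq_mul, Function.comp_def] using (Complex.hasDerivAt_cos ((t:ℂ)*Ω)).scomp t hlin
  have hsin : HasDerivAt (fun s : ℝ => Complex.sin ((s : ℂ) * Ω))
      (Ω * Complex.cos ((t:ℂ)*Ω)) t := by
    simpa [smul_eq_mul, Function.comp_def] using (Complex.hasDerivAt_sin ((t:ℂ)*Ω)).scomp t hlin
  have harg : HasDerivAt (fun s : ℝ => Complex.I * (ω:ℂ) * (s:ℂ) / 2)
      (Complex.I * (ω:ℂ) / 2) t := by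
    simpa using (hre.const_mul (Complex.I * (ω:ℂ))).div_const 2
  have hexp : HasDerivAt (fun s : ℝ => Complex.exp (Complex.I * (ω:ℂ) * (s:ℂ) / 2))
      (Complex.I * (ω:ℂ) / 2 * Complex.exp (Complex.I * (ω:ℂ) * (t:ℂ) / 2)) t := by
    simpa [smul_eq_mul, Function.comp_def] using (Complex.hasDerivAt_exp _).scomp t harg
  have hexpn : HasDerivAt (fun s : ℝ => Complex.exp (-(Complex.I * (ω:ℂ) * (s:ℂ) / 2)))
      (-(Complex.I * (ω:ℂ) / 2) * Complex.exp (-(Complex.I * (ω:ℂ) * (t:ℂ) / 2))) t := by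
    simpa [smul_eq_mul, Function.comp_def] using (Complex.hasDerivAt_exp _).scomp t harg.neg
  set B : ℂ := 4 * k ^ 2 + 2 * (lam : ℂ) * (α : ℂ) ^ 2 + (ω : ℂ) with hB
  have hd00 : HasDerivAt (fun s : ℝ => Complex.exp (Complex.I * ω * (s : ℂ) / 2) *
        (Complex.cos ((s : ℂ) * Ω) + B / (2 * Complex.I * Ω) * Complex.sin ((s : ℂ) * Ω)))
      (Complex.I * (ω:ℂ) / 2 * Complex.exp (Complex.I * (ω:ℂ) * (t:ℂ) / 2) *
        (Complex.cos ((t : ℂ) * Ω) + B / (2 * Complex.I * Ω) * Complex.sin ((t : ℂ) * Ω))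
       + Complex.exp (Complex.I * ω * (t : ℂ) / 2) *
        (Ω * -(Complex.sin ((t:ℂ)*Ω)) + B / (2 * Complex.I * Ω) * (Ω * Complex.cos ((t:ℂ)*Ω)))) t :=
    hexp.mul (hcos.add (hsin.const_mul _))
  have hd01 : HasDerivAt (fun s : ℝ => Complex.exp (Complex.I * ω * (s : ℂ) / 2) *
        ((2 * (α : ℂ) * k + Complex.I * c) * Complex.sin ((s : ℂ) * Ω) / Ω))
      (Complex.I * (ω:ℂ) / 2 * Complex.exp (Complex.I * (ω:ℂ) * (t:ℂ) / 2) *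
        ((2 * (α : ℂ) * k + Complex.I * c) * Complex.sin ((t : ℂ) * Ω) / Ω)
       + Complex.exp (Complex.I * ω * (t : ℂ) / 2) *
        ((2 * (α : ℂ) * k + Complex.I * c) * (Ω * Complex.cos ((t:ℂ)*Ω)) / Ω)) t :=
    hexp.mul (((hsin.const_mul _)).div_const Ω)
  have hd10 : HasDerivAt (fun s : ℝ => Complex.exp (-(Complex.I * ω * (s : ℂ) / 2)) *
        ((lam : ℂ) * (2 * (α : ℂ) * k - Complex.I * starRingEnd ℂ c)
          * Complex.sin ((s : ℂ) * Ω) / Ω))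
      (-(Complex.I * (ω:ℂ) / 2) * Complex.exp (-(Complex.I * (ω:ℂ) * (t:ℂ) / 2)) *
        ((lam : ℂ) * (2 * (α : ℂ) * k - Complex.I * starRingEnd ℂ c)
          * Complex.sin ((t : ℂ) * Ω) / Ω)
       + Complex.exp (-(Complex.I * ω * (t : ℂ) / 2)) *
        ((lam : ℂ) * (2 * (α : ℂ) * k - Complex.I * starRingEnd ℂ c)
          * (Ω * Complex.cos ((t:ℂ)*Ω)) / Ω)) t :=
    hexpn.mul ((hsin.const_mul _).div_const Ω)
  have hd11 : HasDerivAt (fun s : ℝ => Complex.exp (-(Complex.I * ω * (s : ℂ) / 2)) *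
        (Complex.cos ((s : ℂ) * Ω) - B / (2 * Complex.I * Ω) * Complex.sin ((s : ℂ) * Ω)))
      (-(Complex.I * (ω:ℂ) / 2) * Complex.exp (-(Complex.I * (ω:ℂ) * (t:ℂ) / 2)) *
        (Complex.cos ((t : ℂ) * Ω) - B / (2 * Complex.I * Ω) * Complex.sin ((t : ℂ) * Ω))
       + Complex.exp (-(Complex.I * ω * (t : ℂ) / 2)) *
        (Ω * -(Complex.sin ((t:ℂ)*Ω)) - B / (2 * Complex.I * Ω) * (Ω * Complex.cos ((t:ℂ)*Ω)))) t :=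
    hexpn.mul (hcos.sub (hsin.const_mul _))
  -- exponential identities
  have hEF : Complex.exp (Complex.I * (ω:ℂ) * (t:ℂ) / 2) *
      Complex.exp (-(Complex.I * (ω:ℂ) * (t:ℂ) / 2)) = 1 := by
    rw [← Complex.exp_add]; ring_nf; exact Complex.exp_zero
  have hG : Complex.exp (Complex.I * (ω:ℂ) * (t:ℂ)) =
      Complex.exp (Complex.I * (ω:ℂ) * (t:ℂ) / 2) *
      Complex.exp (Complex.I * (ω:ℂ) * (t:ℂ) / 2) := by
    rw [← Complex.exp_add]; ring_nf
  have hH : Complex.exp (-(Complex.I * (ω:ℂ) * (t:ℂ))) =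
      Complex.exp (-(Complex.I * (ω:ℂ) * (t:ℂ) / 2)) *
      Complex.exp (-(Complex.I * (ω:ℂ) * (t:ℂ) / 2)) := by
    rw [← Complex.exp_add]; ring_nf
  have hEne : Complex.exp (Complex.I * (ω:ℂ) * (t:ℂ) / 2) ≠ 0 := Complex.exp_ne_zero _
  have hFne : Complex.exp (-(Complex.I * (ω:ℂ) * (t:ℂ) / 2)) ≠ 0 := Complex.exp_ne_zero _
  have hI2 : (Complex.I : ℂ) ^ 2 = -1 := Complex.I_sq
  have e00 : deriv (fun s : ℝ =>
      (!![Complex.exp (Complex.I * ω * (s : ℂ) / 2) *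
            (Complex.cos ((s : ℂ) * Ω) + B / (2 * Complex.I * Ω) * Complex.sin ((s : ℂ) * Ω)),
          Complex.exp (Complex.I * ω * (s : ℂ) / 2) *
            ((2 * (α : ℂ) * k + Complex.I * c) * Complex.sin ((s : ℂ) * Ω) / Ω);
          Complex.exp (-(Complex.I * ω * (s : ℂ) / 2)) *
            ((lam : ℂ) * (2 * (α : ℂ) * k - Complex.I * starRingEnd ℂ c)
              * Complex.sin ((s : ℂ) * Ω) / Ω),
          Complex.exp (-(Complex.I * ω * (s : ℂ) / 2)) *
            (Complex.cos ((s : ℂ) * Ω) - B / (2 * Complex.I * Ω) * Complex.sin ((s : ℂ) * Ω))]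
        : Matrix (Fin 2) (Fin 2) ℂ) 0 0) t =
      Complex.I * (ω:ℂ) / 2 * Complex.exp (Complex.I * (ω:ℂ) * (t:ℂ) / 2) *
        (Complex.cos ((t : ℂ) * Ω) + B / (2 * Complex.I * Ω) * Complex.sin ((t : ℂ) * Ω))
       + Complex.exp (Complex.I * ω * (t : ℂ) / 2) *
        (Ω * -(Complex.sin ((t:ℂ)*Ω)) + B / (2 * Complex.I * Ω) * (Ω * Complex.cos ((t:ℂ)*Ω))) :=
    hd00.deriv
  have e01 : deriv (fun s : ℝ =>
      (!![Complex.exp (Complex.I * ω * (s : ℂ) / 2) *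
            (Complex.cos ((s : ℂ) * Ω) + B / (2 * Complex.I * Ω) * Complex.sin ((s : ℂ) * Ω)),
          Complex.exp (Complex.I * ω * (s : ℂ) / 2) *
            ((2 * (α : ℂ) * k + Complex.I * c) * Complex.sin ((s : ℂ) * Ω) / Ω);
          Complex.exp (-(Complex.I * ω * (s : ℂ) / 2)) *
            ((lam : ℂ) * (2 * (α : ℂ) * k - Complex.I * starRingEnd ℂ c)
              * Complex.sin ((s : ℂ) * Ω) / Ω),
          Complex.exp (-(Complex.I * ω * (s : ℂ) / 2)) *
            (Complex.cos ((s : ℂ) * Ω) - B / (2 * Complex.I * Ω) * Complex.sin ((s : ℂ) * Ω))]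
        : Matrix (Fin 2) (Fin 2) ℂ) 0 1) t =
      Complex.I * (ω:ℂ) / 2 * Complex.exp (Complex.I * (ω:ℂ) * (t:ℂ) / 2) *
        ((2 * (α : ℂ) * k + Complex.I * c) * Complex.sin ((t : ℂ) * Ω) / Ω)
       + Complex.exp (Complex.I * ω * (t : ℂ) / 2) *
        ((2 * (α : ℂ) * k + Complex.I * c) * (Ω * Complex.cos ((t:ℂ)*Ω)) / Ω) :=
    hd01.deriv
  have e10 : deriv (fun s : ℝ =>
      (!![Complex.exp (Complex.I * ω * (s : ℂ) / 2) *
            (Complex.cos ((s : ℂ) * Ω) + B / (2 * Complex.I * Ω) * Complex.sin ((s : ℂ) * Ω)),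
          Complex.exp (Complex.I * ω * (s : ℂ) / 2) *
            ((2 * (α : ℂ) * k + Complex.I * c) * Complex.sin ((s : ℂ) * Ω) / Ω);
          Complex.exp (-(Complex.I * ω * (s : ℂ) / 2)) *
            ((lam : ℂ) * (2 * (α : ℂ) * k - Complex.I * starRingEnd ℂ c)
              * Complex.sin ((s : ℂ) * Ω) / Ω),
          Complex.exp (-(Complex.I * ω * (s : ℂ) / 2)) *
            (Complex.cos ((s : ℂ) * Ω) - B / (2 * Complex.I * Ω) * Complex.sin ((s : ℂ) * Ω))]
        : Matrix (Fin 2) (Fin 2) ℂ) 1 0) t =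
      -(Complex.I * (ω:ℂ) / 2) * Complex.exp (-(Complex.I * (ω:ℂ) * (t:ℂ) / 2)) *
        ((lam : ℂ) * (2 * (α : ℂ) * k - Complex.I * starRingEnd ℂ c)
          * Complex.sin ((t : ℂ) * Ω) / Ω)
       + Complex.exp (-(Complex.I * ω * (t : ℂ) / 2)) *
        ((lam : ℂ) * (2 * (α : ℂ) * k - Complex.I * starRingEnd ℂ c)
          * (Ω * Complex.cos ((t:ℂ)*Ω)) / Ω) :=
    hd10.deriv
  have e11 : deriv (fun s : ℝ =>
      (!![Complex.exp (Complex.I * ω * (s : ℂ) / 2) *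
            (Complex.cos ((s : ℂ) * Ω) + B / (2 * Complex.I * Ω) * Complex.sin ((s : ℂ) * Ω)),
          Complex.exp (Complex.I * ω * (s : ℂ) / 2) *
            ((2 * (α : ℂ) * k + Complex.I * c) * Complex.sin ((s : ℂ) * Ω) / Ω);
          Complex.exp (-(Complex.I * ω * (s : ℂ) / 2)) *
            ((lam : ℂ) * (2 * (α : ℂ) * k - Complex.I * starRingEnd ℂ c)
              * Complex.sin ((s : ℂ) * Ω) / Ω),
          Complex.exp (-(Complex.I * ω * (s : ℂ) / 2)) *
            (Complex.cos ((s : ℂ) * Ω) - B / (2 * Complex.I * Ω) * Complex.sin ((s : ℂ) * Ω))]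
        : Matrix (Fin 2) (Fin 2) ℂ) 1 1) t =
      -(Complex.I * (ω:ℂ) / 2) * Complex.exp (-(Complex.I * (ω:ℂ) * (t:ℂ) / 2)) *
        (Complex.cos ((t : ℂ) * Ω) - B / (2 * Complex.I * Ω) * Complex.sin ((t : ℂ) * Ω))
       + Complex.exp (-(Complex.I * ω * (t : ℂ) / 2)) *
        (Ω * -(Complex.sin ((t:ℂ)*Ω)) - B / (2 * Complex.I * Ω) * (Ω * Complex.cos ((t:ℂ)*Ω))) :=
    hd11.deriv
  have hI3 : (Complex.I:ℂ)^3 = -Complex.I := by rw [pow_succ, hI2, neg_one_mul]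
  have hI4 : (Complex.I:ℂ)^4 = 1 := by rw [pow_succ, hI3, neg_mul, Complex.I_mul_I, neg_neg]
  have hI5 : (Complex.I:ℂ)^5 = Complex.I := by rw [pow_succ, hI4, one_mul]
  have hI6 : (Complex.I:ℂ)^6 = -1 := by rw [pow_succ, hI5, Complex.I_mul_I]
  have hlam3 : (lam:ℂ)^3 = lam := by rw [pow_succ, hlam2, one_mul]
  have hlam4 : (lam:ℂ)^4 = 1 := by rw [pow_succ, hlam3, ← sq, hlam2]
  have hD : B/(2*Complex.I*Ω) = -Complex.I*B/(2*Ω) := by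
    rw [div_eq_div_iff (by simp [hΩne, Complex.I_ne_zero]) (by simp [hΩne])]
    linear_combination (2*B*Ω) * Complex.I_sq
  fin_cases i <;> fin_cases j
  · simp only [Fin.zero_eta, Fin.mk_one]
    rw [e00, hD]
    simp [Complex.exp_neg, hG, Matrix.mul_apply, Fin.sum_univ_two]
    refine mul_right_cancel₀ (pow_ne_zero 3 hΩne) ?_
    field_simp
    try rw [div_eq_iff (by simp [hΩne])]
    linear_combination (norm := (simp only [hB]; ring_nf; try simp only [hI2, hI3, hI4, hI5, hI6, hlam2, hlam3, hlam4]; try ring_nf)) (Complex.sin ((t:ℂ)*Ω)) * hkey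
  · simp only [Fin.zero_eta, Fin.mk_one]
    rw [e01, hD]
    simp [Complex.exp_neg, hG, Matrix.mul_apply, Fin.sum_univ_two]
    refine mul_right_cancel₀ (pow_ne_zero 3 hΩne) ?_
    field_simp
    try rw [div_eq_iff (by simp [hΩne])]
    linear_combination (norm := (simp only [hB]; ring_nf; try simp only [hI2, hI3, hI4, hI5, hI6, hlam2, hlam3, hlam4]; try ring_nf)) (0:ℂ) * hkey
  · simp only [Fin.zero_eta, Fin.mk_one]
    rw [e10, hD]
    simp [Complex.exp_neg, hG, Matrix.mul_apply, Fin.sum_univ_two]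
    refine mul_right_cancel₀ (pow_ne_zero 3 hΩne) ?_
    field_simp
    try rw [div_eq_iff (by simp [hΩne])]
    linear_combination (norm := (simp only [hB]; ring_nf; try simp only [hI2, hI3, hI4, hI5, hI6, hlam2, hlam3, hlam4]; try ring_nf)) (0:ℂ) * hkey
  · simp only [Fin.zero_eta, Fin.mk_one]
    rw [e11, hD]
    simp [Complex.exp_neg, hG, Matrix.mul_apply, Fin.sum_univ_two]
    refine mul_right_cancel₀ (pow_ne_zero 3 hΩne) ?_
    field_simp
    try rw [div_eq_iff (by simp [hΩne])]
    linear_combination (norm := (simp only [hB]; ring_nf; try simp only [hI2, hI3, hI4, hI5, hI6, hlam2, hlam3, hlam4]; try ring_nf)) (Complex.sin ((t:ℂ)*Ω)) * hkey
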